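/- Let ψ be a branching mechanism with ∫_1^∞ du/ψ(u) < ∞, and suppose its lower index γ satisfies γ > 1. Then liminf_{δ→0+} log v(δ) / log(1/δ) ≤ 1/(η−1), where η is the upper index of ψ at infinity. -/

import Mathlib

open Set Filter MeasureTheory

/-- A (critical or subcritical) branching mechanism
`ψ(λ) = α λ + β λ² + ∫_{(0,∞)} (e^{-λr} - 1 + λ r) π(dr)`, where `α, β ≥ 0` and `π`
is a σ-finite measure on `(0,∞)` with `∫ (r ∧ r²) π(dr) < ∞`. -/
structure BranchingMechanism : Type where
  α : ℝ
  β : ℝ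
  pi : Measure ℝ
  alpha_nonneg : 0 ≤ α
  beta_nonneg : 0 ≤ β
  sigmaFinite : SigmaFinite pi
  supported : pi (Set.Iic 0) = 0
  finite_int : (∫⁻ r in Set.Ioi (0 : ℝ), ENNReal.ofReal (min r (r ^ 2)) ∂pi) < ⊤

/-- The function `ψ` associated with a branching mechanism. -/
noncomputable def BranchingMechanism.psi (b : BranchingMechanism) (l : ℝ) : ℝ :=
  b.α * l + b.β * l ^ 2 +
    ∫ r in Set.Ioi (0 : ℝ), (Real.exp (-l * r) - 1 + l * r) ∂b.pi

/-- The lower index `γ = sup{a ≥ 0 : λ^{-a} ψ(λ) → ∞ as λ → ∞}` of `ψ` at infinity. -/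
noncomputable def lowerIndex (ψ : ℝ → ℝ) : ℝ :=
  sSup {a : ℝ | 0 ≤ a ∧ Tendsto (fun l : ℝ => l ^ (-a) * ψ l) atTop atTop}

/-- The upper index `η = inf{a ≥ 0 : λ^{-a} ψ(λ) → 0 as λ → ∞}` of `ψ` at infinity. -/
noncomputable def upperIndex (ψ : ℝ → ℝ) : ℝ :=
  sInf {a : ℝ | 0 ≤ a ∧ Tendsto (fun l : ℝ => l ^ (-a) * ψ l) atTop (nhds 0)}

lemma lem_exp_nonneg (x : ℝ) (hx : 0 ≤ x) : 0 ≤ Real.exp (-x) - 1 + x := by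
  have := Real.add_one_le_exp (-x); linarith

lemma lem_exp_le_min {x : ℝ} (hx : 0 ≤ x) : Real.exp (-x) - 1 + x ≤ min x (x ^ 2) := by
  have h1 : Real.exp (-x) ≤ 1 := by rw [Real.exp_le_one_iff]; linarith
  refine le_min (by linarith) ?_
  rcases le_or_gt x 1 with h | h
  · have habs : |(-x)| ≤ 1 := by rw [abs_neg, abs_of_nonneg hx]; exact h
    have := Real.abs_exp_sub_one_sub_id_le habs
    have := abs_le.mp this
    have h2 : (-x) ^ 2 = x ^ 2 := by ring
    rw [h2] at this
    linarith [this.2]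
  · nlinarith

lemma lem_exp_mono {x y : ℝ} (hx : 0 ≤ x) (hxy : x ≤ y) :
    Real.exp (-x) + x ≤ Real.exp (-y) + y := by
  have h1 : Real.exp (-x) ≤ 1 := by rw [Real.exp_le_one_iff]; linarith
  have h2 := Real.add_one_le_exp (-(y - x))
  have h3 : Real.exp (-y) = Real.exp (-x) * Real.exp (-(y-x)) := by
    rw [← Real.exp_add]; ring_nf
  nlinarith [Real.exp_pos (-(y-x)), Real.exp_pos (-x)]

lemma lem_slope {s t : ℝ} (hs : 0 ≤ s) (hst : s ≤ t) :
    s * (1 - Real.exp (-t)) ≤ t * (1 - Real.exp (-s)) := by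
  set F : ℝ → ℝ := fun u => s * Real.exp (-u) + u - s - u * Real.exp (-s) with hF
  have hderiv : ∀ u : ℝ, HasDerivAt F (1 - Real.exp (-s) - s * Real.exp (-u)) u := by
    intro u
    have he : HasDerivAt (fun u : ℝ => Real.exp (-u)) (-Real.exp (-u)) u := by
      convert (hasDerivAt_neg u).exp using 1; ring
    have : HasDerivAt F (s * (-Real.exp (-u)) + 1 - 0 - (1 * Real.exp (-s))) u := by
      exact (((he.const_mul s).add (hasDerivAt_id u)).sub_const s).sub
        ((hasDerivAt_id u).mul_const (Real.exp (-s))) |>.congr_deriv (by ring)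
    convert this using 1; ring
  have hmono : MonotoneOn F (Ici s) := by
    refine monotoneOn_of_deriv_nonneg (convex_Ici s) ?_ ?_ ?_
    · exact fun u _ => (hderiv u).continuousAt.continuousWithinAt
    · exact fun u _ => (hderiv u).differentiableAt.differentiableWithinAt
    · intro u hu
      rw [(hderiv u).deriv]
      have hu' : s < u := by simpa using hu
      have h1 : Real.exp (-u) ≤ Real.exp (-s) := Real.exp_le_exp.mpr (by linarith)
      have h2 := Real.add_one_le_exp s
      have h3 : Real.exp (-s) * Real.exp s = 1 := by rw [← Real.exp_add]; simp
      nlinarith [Real.exp_pos (-s), Real.exp_pos s, mul_le_mul_of_nonneg_left h1 hs]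
  have h0 : F s = 0 := by simp [hF]
  have := hmono (self_mem_Ici) (by exact hst : t ∈ Ici s) hst
  rw [h0] at this
  simp only [hF] at this
  nlinarith

lemma lem_min_scale {l r : ℝ} (hl : 0 ≤ l) (hr : 0 < r) :
    min (l * r) ((l * r) ^ 2) ≤ max l (l ^ 2) * min r (r ^ 2) := by
  rcases min_cases r (r ^ 2) with ⟨h1, h2⟩ | ⟨h1, h2⟩ <;> rw [h1]
  · calc min (l * r) ((l * r) ^ 2) ≤ l * r := min_le_left _ _
      _ ≤ max l (l ^ 2) * r := by
        exact mul_le_mul_of_nonneg_right (le_max_left _ _) hr.le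
  · calc min (l * r) ((l * r) ^ 2) ≤ (l * r) ^ 2 := min_le_right _ _
      _ = l ^ 2 * r ^ 2 := by ring
      _ ≤ max l (l ^ 2) * r ^ 2 := by
        exact mul_le_mul_of_nonneg_right (le_max_right _ _) (by positivity)

lemma lem_int_min (b : BranchingMechanism) :
    IntegrableOn (fun r : ℝ => min r (r ^ 2)) (Ioi 0) b.pi := by
  constructor
  · exact (continuous_id.min (by continuity)).aestronglyMeasurable.restrict
  · rw [hasFiniteIntegral_iff_ofReal]
    · exact b.finite_int
    · filter_upwards [ae_restrict_mem measurableSet_Ioi] with r hr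
      have : (0:ℝ) < r := hr
      positivity

lemma lem_int_f (b : BranchingMechanism) {l : ℝ} (hl : 0 ≤ l) :
    IntegrableOn (fun r : ℝ => Real.exp (-l * r) - 1 + l * r) (Ioi 0) b.pi := by
  refine Integrable.mono ((lem_int_min b).const_mul (max l (l ^ 2))) ?_ ?_
  · exact (Continuous.aestronglyMeasurable (by continuity)).restrict
  · filter_upwards [ae_restrict_mem measurableSet_Ioi] with r hr
    have hr' : (0:ℝ) < r := hr
    have hx : 0 ≤ l * r := by positivity
    have h0 : 0 ≤ Real.exp (-(l * r)) - 1 + l * r := lem_exp_nonneg _ hx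
    have h1 := lem_exp_le_min hx
    have h2 := lem_min_scale hl hr'
    have hmin : (0:ℝ) ≤ min r (r ^ 2) := by positivity
    have hmax : (0:ℝ) ≤ max l (l ^ 2) := le_max_of_le_left hl
    rw [Real.norm_eq_abs, Real.norm_eq_abs, neg_mul, abs_of_nonneg h0,
      abs_of_nonneg (by positivity)]
    calc Real.exp (-(l * r)) - 1 + l * r ≤ min (l*r) ((l*r)^2) := h1
      _ ≤ max l (l ^ 2) * min r (r ^ 2) := h2

lemma psi_nonneg (b : BranchingMechanism) {l : ℝ} (hl : 0 ≤ l) : 0 ≤ b.psi l := by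
  unfold BranchingMechanism.psi
  have h1 : 0 ≤ b.α * l := mul_nonneg b.alpha_nonneg hl
  have h2 : 0 ≤ b.β * l ^ 2 := mul_nonneg b.beta_nonneg (by positivity)
  have h3 : 0 ≤ ∫ r in Set.Ioi (0:ℝ), (Real.exp (-l * r) - 1 + l * r) ∂b.pi := by
    refine setIntegral_nonneg measurableSet_Ioi fun r hr => ?_
    have : (0:ℝ) < r := hr
    rw [neg_mul]
    exact lem_exp_nonneg _ (by positivity)
  linarith

lemma psi_monotoneOn (b : BranchingMechanism) : MonotoneOn b.psi (Ici 0) := by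
  intro x hx y hy hxy
  simp only [mem_Ici] at hx hy
  unfold BranchingMechanism.psi
  have h1 : b.α * x ≤ b.α * y := mul_le_mul_of_nonneg_left hxy b.alpha_nonneg
  have h2 : b.β * x ^ 2 ≤ b.β * y ^ 2 := by
    apply mul_le_mul_of_nonneg_left _ b.beta_nonneg
    nlinarith
  have h3 : (∫ r in Set.Ioi (0:ℝ), (Real.exp (-x * r) - 1 + x * r) ∂b.pi)
      ≤ ∫ r in Set.Ioi (0:ℝ), (Real.exp (-y * r) - 1 + y * r) ∂b.pi := by
    refine setIntegral_mono_on (lem_int_f b hx) (lem_int_f b hy) measurableSet_Ioi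
      fun r hr => ?_
    have hr' : (0:ℝ) < r := hr
    have := lem_exp_mono (x := x * r) (y := y * r) (by positivity)
      (by nlinarith)
    rw [neg_mul, neg_mul]
    linarith
  linarith

lemma psi_slope (b : BranchingMechanism) {x y : ℝ} (hx : 0 < x) (hxy : x ≤ y) :
    y * b.psi x ≤ x * b.psi y := by
  unfold BranchingMechanism.psi
  have hy : 0 < y := lt_of_lt_of_le hx hxy
  have h2 : y * (b.β * x ^ 2) ≤ x * (b.β * y ^ 2) := by
    have : b.β * (x * y) * x ≤ b.β * (x * y) * y :=
      mul_le_mul_of_nonneg_left hxy (mul_nonneg b.beta_nonneg (by positivity))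
    nlinarith
  have h3 : y * (∫ r in Set.Ioi (0:ℝ), (Real.exp (-x * r) - 1 + x * r) ∂b.pi)
      ≤ x * ∫ r in Set.Ioi (0:ℝ), (Real.exp (-y * r) - 1 + y * r) ∂b.pi := by
    rw [← integral_const_mul, ← integral_const_mul]
    refine setIntegral_mono_on ((lem_int_f b hx.le).const_mul y)
      ((lem_int_f b hy.le).const_mul x) measurableSet_Ioi fun r hr => ?_
    have hr' : (0:ℝ) < r := hr
    have h := lem_slope (s := x * r) (t := y * r) (by positivity) (by nlinarith)
    rw [← mul_le_mul_iff_left₀ hr']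
    rw [neg_mul, neg_mul] at *
    nlinarith [h]
  nlinarith [h2, h3]

lemma psi_le (b : BranchingMechanism) :
    ∃ C : ℝ, 0 < C ∧ ∀ l : ℝ, 1 ≤ l → b.psi l ≤ C * l ^ 2 := by
  set I := ∫ r in Set.Ioi (0:ℝ), min r (r ^ 2) ∂b.pi with hI
  have hI0 : 0 ≤ I := setIntegral_nonneg measurableSet_Ioi fun r hr => by
    have : (0:ℝ) < r := hr; positivity
  refine ⟨b.α + b.β + I + 1, by linarith [b.alpha_nonneg, b.beta_nonneg], fun l hl => ?_⟩
  unfold BranchingMechanism.psi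
  have hl0 : 0 < l := lt_of_lt_of_le one_pos hl
  have h3 : (∫ r in Set.Ioi (0:ℝ), (Real.exp (-l * r) - 1 + l * r) ∂b.pi)
      ≤ l ^ 2 * I := by
    rw [hI, ← integral_const_mul]
    refine setIntegral_mono_on (lem_int_f b hl0.le) ((lem_int_min b).const_mul _)
      measurableSet_Ioi fun r hr => ?_
    have hr' : (0:ℝ) < r := hr
    have h1 : Real.exp (-(l*r)) - 1 + l*r ≤ min (l*r) ((l*r)^2) :=
      lem_exp_le_min (by positivity)
    have h2 := lem_min_scale hl0.le hr'
    have hmax : max l (l ^ 2) ≤ l ^ 2 := by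
      apply max_le _ le_rfl; nlinarith
    have hmin : (0:ℝ) ≤ min r (r ^ 2) := by positivity
    rw [neg_mul]
    calc Real.exp (-(l*r)) - 1 + l*r ≤ max l (l^2) * min r (r^2) := h1.trans h2
      _ ≤ l ^ 2 * min r (r ^ 2) := mul_le_mul_of_nonneg_right hmax hmin
  have h1 : b.α * l ≤ b.α * l ^ 2 := by
    have hll : l ≤ l ^ 2 := by nlinarith
    exact mul_le_mul_of_nonneg_left hll b.alpha_nonneg
  nlinarith [hl0]

lemma upper_mem_three (b : BranchingMechanism) :
    (3:ℝ) ∈ {a : ℝ | 0 ≤ a ∧ Tendsto (fun l : ℝ => l ^ (-a) * b.psi l) atTop (nhds 0)} := by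
  obtain ⟨C, hC, hCle⟩ := psi_le b
  refine ⟨by norm_num, ?_⟩
  have hg : Tendsto (fun l : ℝ => C * l ^ (-(1:ℝ))) atTop (nhds 0) := by
    simpa using (tendsto_rpow_neg_atTop (y := 1) one_pos).const_mul C
  refine squeeze_zero' ?_ ?_ hg
  · filter_upwards [eventually_ge_atTop (1:ℝ)] with l hl
    exact mul_nonneg (Real.rpow_nonneg (by linarith) _) (psi_nonneg b (by linarith))
  · filter_upwards [eventually_ge_atTop (1:ℝ)] with l hl
    have hl0 : (0:ℝ) < l := by linarith
    have key : l ^ (-(3:ℝ)) * (C * l ^ 2) = C * l ^ (-(1:ℝ)) := by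
      rw [← Real.rpow_natCast l 2, ← mul_assoc, mul_comm (l ^ (-(3:ℝ))) C, mul_assoc,
        ← Real.rpow_add hl0]
      norm_num
    calc l ^ (-(3:ℝ)) * b.psi l ≤ l ^ (-(3:ℝ)) * (C * l ^ 2) :=
          mul_le_mul_of_nonneg_left (hCle l hl) (Real.rpow_nonneg hl0.le _)
      _ = C * l ^ (-(1:ℝ)) := key

lemma exists_a0 (b : BranchingMechanism) (hγ : 1 < lowerIndex b.psi) :
    ∃ a₀ : ℝ, 1 < a₀ ∧ Tendsto (fun l : ℝ => l ^ (-a₀) * b.psi l) atTop atTop := by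
  by_contra h
  push_neg at h
  have : lowerIndex b.psi ≤ 1 := by
    apply Real.sSup_le _ zero_le_one
    rintro a ⟨ha0, hat⟩
    by_contra hgt
    push_neg at hgt
    exact h a hgt hat
  linarith

lemma le_upper (b : BranchingMechanism) {a₀ : ℝ} (ha : 1 < a₀)
    (ht : Tendsto (fun l : ℝ => l ^ (-a₀) * b.psi l) atTop atTop) :
    a₀ ≤ upperIndex b.psi := by
  refine le_csInf ⟨3, upper_mem_three b⟩ ?_
  rintro a' ⟨ha'0, ha't⟩
  by_contra hlt
  push_neg at hlt
  have ht' : Tendsto (fun l : ℝ => l ^ (-a') * b.psi l) atTop atTop := by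
    refine tendsto_atTop_mono' atTop ?_ ht
    filter_upwards [eventually_ge_atTop (1:ℝ)] with l hl
    exact mul_le_mul_of_nonneg_right
      (Real.rpow_le_rpow_of_exponent_le hl (by linarith)) (psi_nonneg b (by linarith))
  exact (not_tendsto_atTop_of_tendsto_nhds ha't) ht'

lemma freq_lower (b : BranchingMechanism) {a : ℝ} (h0 : 0 ≤ a)
    (hlt : a < upperIndex b.psi) :
    ∃ c₀ : ℝ, 0 < c₀ ∧ ∀ Λ : ℝ, ∃ l : ℝ, Λ ≤ l ∧ 1 ≤ l ∧ c₀ * l ^ a ≤ b.psi l := by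
  have hnot : ¬ Tendsto (fun l : ℝ => l ^ (-a) * b.psi l) atTop (nhds 0) := by
    intro hT
    have : upperIndex b.psi ≤ a :=
      csInf_le ⟨0, fun x hx => hx.1⟩ ⟨h0, hT⟩
    linarith
  rw [Metric.tendsto_nhds] at hnot
  push_neg at hnot
  obtain ⟨c₀, hc₀, hfr⟩ := hnot
  refine ⟨c₀, hc₀, fun Λ => ?_⟩
  have := hfr.and_eventually (eventually_ge_atTop (max Λ 1))
  obtain ⟨l, hbig, hl⟩ := this.exists
  have hl1 : (1:ℝ) ≤ l := le_trans (le_max_right _ _) hl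
  have hlΛ : Λ ≤ l := le_trans (le_max_left _ _) hl
  have hl0 : (0:ℝ) < l := by linarith
  rw [Real.dist_eq, sub_zero] at hbig
  have hnn : 0 ≤ l ^ (-a) * b.psi l :=
    mul_nonneg (Real.rpow_nonneg hl0.le _) (psi_nonneg b hl0.le)
  rw [abs_of_nonneg hnn] at hbig
  refine ⟨l, hlΛ, hl1, ?_⟩
  have key : l ^ a * (l ^ (-a) * b.psi l) = b.psi l := by
    rw [← mul_assoc, ← Real.rpow_add hl0]
    simp
  calc c₀ * l ^ a ≤ (l ^ (-a) * b.psi l) * l ^ a :=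
        mul_le_mul_of_nonneg_right hbig (Real.rpow_nonneg hl0.le _)
    _ = b.psi l := by rw [mul_comm]; exact key

lemma tail_bound (b : BranchingMechanism) {a₀ lam K : ℝ} (ha₀ : 1 < a₀) (hK : 1 ≤ K)
    (hlam : 1 < lam)
    (hlow : ∀ u : ℝ, lam ≤ u → u ^ a₀ ≤ b.psi u) :
    IntegrableOn (fun u : ℝ => 1 / b.psi u) (Ioi lam) volume ∧
    (∫ u in Ioi lam, 1 / b.psi u) ≤
      lam / b.psi lam * ((K - 1) * Real.log lam) + (lam ^ K) ^ (1 - a₀) / (a₀ - 1) := by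
  have hlam0 : (0:ℝ) < lam := by linarith
  set M := lam ^ K with hM
  have hlamM : lam ≤ M := by
    rw [hM]; nth_rewrite 1 [← Real.rpow_one lam]
    exact Real.rpow_le_rpow_of_exponent_le hlam.le hK
  have hM0 : (0:ℝ) < M := Real.rpow_pos_of_pos hlam0 K
  have hψlam : 0 < b.psi lam := lt_of_lt_of_le (Real.rpow_pos_of_pos hlam0 a₀) (hlow lam le_rfl)
  have hψpos : ∀ u : ℝ, lam ≤ u → 0 < b.psi u := fun u hu =>
    lt_of_lt_of_le (Real.rpow_pos_of_pos (by linarith) a₀) (hlow u hu)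
  -- measurability
  have hmono : MonotoneOn b.psi (Ioi lam) :=
    (psi_monotoneOn b).mono (fun x hx => le_of_lt (lt_trans hlam0 hx))
  have hmeas : AEStronglyMeasurable (fun u : ℝ => 1 / b.psi u) (volume.restrict (Ioi lam)) := by
    have := aemeasurable_restrict_of_monotoneOn (μ := volume) measurableSet_Ioi hmono
    have h2 := this.inv.aestronglyMeasurable; simp only [one_div]; exact h2
  have hmeas_Ioc : AEStronglyMeasurable (fun u : ℝ => 1 / b.psi u) (volume.restrict (Ioc lam M)) :=
    hmeas.mono_measure (Measure.restrict_mono Ioc_subset_Ioi_self le_rfl)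
  have hmeas_IoiM : AEStronglyMeasurable (fun u : ℝ => 1 / b.psi u) (volume.restrict (Ioi M)) :=
    hmeas.mono_measure (Measure.restrict_mono (Ioi_subset_Ioi hlamM) le_rfl)
  -- integrable on Ioc lam M
  have hint_Ioc : IntegrableOn (fun u : ℝ => 1 / b.psi u) (Ioc lam M) volume := by
    have hconst : IntegrableOn (fun _ : ℝ => (b.psi lam)⁻¹) (Ioc lam M) volume := by
      rw [integrableOn_const_iff]
      right; rw [Real.volume_Ioc]; exact ENNReal.ofReal_lt_top
    refine Integrable.mono hconst hmeas_Ioc ?_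
    · filter_upwards [ae_restrict_mem measurableSet_Ioc] with u hu
      have hu1 : lam ≤ u := le_of_lt hu.1
      have h1 : b.psi lam ≤ b.psi u :=
        psi_monotoneOn b (by simp [mem_Ici]; linarith) (by simp [mem_Ici]; linarith) hu1
      rw [Real.norm_eq_abs, Real.norm_eq_abs, one_div,
        abs_of_nonneg (inv_nonneg.mpr (hψpos u hu1).le),
        abs_of_nonneg (inv_nonneg.mpr hψlam.le)]
      exact inv_anti₀ hψlam h1
  -- integrable on Ioi M
  have hrexp : -a₀ < -1 := by linarith
  have hint_IoiM : IntegrableOn (fun u : ℝ => 1 / b.psi u) (Ioi M) volume := by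
    refine Integrable.mono (integrableOn_Ioi_rpow_of_lt hrexp hM0) hmeas_IoiM ?_
    filter_upwards [ae_restrict_mem measurableSet_Ioi] with u hu
    have huM : M < u := hu
    have hu1 : lam ≤ u := le_trans hlamM huM.le
    have hu0 : (0:ℝ) < u := by linarith
    rw [Real.norm_eq_abs, Real.norm_eq_abs, one_div,
      abs_of_nonneg (inv_nonneg.mpr (hψpos u hu1).le),
      abs_of_nonneg (Real.rpow_nonneg hu0.le _)]
    rw [Real.rpow_neg hu0.le]
    exact inv_anti₀ (Real.rpow_pos_of_pos hu0 a₀) (hlow u hu1)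
  have hunion : Ioc lam M ∪ Ioi M = Ioi lam := Ioc_union_Ioi_eq_Ioi hlamM
  have hint : IntegrableOn (fun u : ℝ => 1 / b.psi u) (Ioi lam) volume := by
    rw [← hunion]; exact hint_Ioc.union hint_IoiM
  refine ⟨hint, ?_⟩
  have hsplit : (∫ u in Ioi lam, 1 / b.psi u) =
      (∫ u in Ioc lam M, 1 / b.psi u) + ∫ u in Ioi M, 1 / b.psi u := by
    rw [← hunion]
    exact setIntegral_union (Ioc_disjoint_Ioi le_rfl) measurableSet_Ioi hint_Ioc hint_IoiM
  -- middle piece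
  have hmid : (∫ u in Ioc lam M, 1 / b.psi u) ≤ lam / b.psi lam * ((K - 1) * Real.log lam) := by
    have hintg : IntegrableOn (fun u : ℝ => lam / b.psi lam * u⁻¹) (Ioc lam M) volume := by
      refine (((ContinuousOn.integrableOn_Icc ?_).mono_set Ioc_subset_Icc_self :
        IntegrableOn (fun u : ℝ => u⁻¹) (Ioc lam M) volume)).const_mul _
      exact ContinuousOn.inv₀ continuousOn_id (fun x hx => by
        have := hx.1; intro h0; rw [h0] at this; linarith)
    have hle : (∫ u in Ioc lam M, 1 / b.psi u) ≤ ∫ u in Ioc lam M, lam / b.psi lam * u⁻¹ := by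
      refine setIntegral_mono_on hint_Ioc hintg measurableSet_Ioc fun u hu => ?_
      have hu1 : lam ≤ u := hu.1.le
      have hu0 : (0:ℝ) < u := by linarith
      have hψu : 0 < b.psi u := hψpos u hu1
      have hslope := psi_slope b hlam0 hu1
      have heq : lam / b.psi lam * u⁻¹ = lam / (b.psi lam * u) := by
        field_simp
      rw [heq, div_le_div_iff₀ hψu (by positivity)]
      nlinarith
    have hcalc : (∫ u in Ioc lam M, lam / b.psi lam * u⁻¹)
        = lam / b.psi lam * ((K - 1) * Real.log lam) := by
      rw [integral_const_mul, ← intervalIntegral.integral_of_le hlamM,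
        integral_inv (by
          rw [uIcc_of_le hlamM]; intro h; exact absurd h.1 (by linarith))]
      rw [Real.log_div (by positivity) (by positivity), hM, Real.log_rpow hlam0]
      ring
    linarith
  -- tail piece
  have htail : (∫ u in Ioi M, 1 / b.psi u) ≤ M ^ (1 - a₀) / (a₀ - 1) := by
    have hle : (∫ u in Ioi M, 1 / b.psi u) ≤ ∫ u in Ioi M, u ^ (-a₀) := by
      refine setIntegral_mono_on hint_IoiM (integrableOn_Ioi_rpow_of_lt hrexp hM0)
        measurableSet_Ioi fun u hu => ?_
      have huM : M < u := hu
      have hu1 : lam ≤ u := le_trans hlamM huM.le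
      have hu0 : (0:ℝ) < u := by linarith
      rw [one_div, Real.rpow_neg hu0.le]
      exact inv_anti₀ (Real.rpow_pos_of_pos hu0 a₀) (hlow u hu1)
    have hcalc : (∫ u in Ioi M, u ^ (-a₀)) = M ^ (1 - a₀) / (a₀ - 1) := by
      rw [integral_Ioi_rpow_of_lt hrexp hM0]
      rw [show -a₀ + 1 = 1 - a₀ by ring]
      rw [neg_div, ← div_neg]
      congr 1; ring
    linarith
  linarith

/-- **Statement 13** (Lemma 5.4 (ii)): if `∫_1^∞ du/ψ(u) < ∞` and the lower index `γ`
satisfies `γ > 1`, then `liminf_{δ→0+} log v(δ) / log(1/δ) ≤ 1/(η-1)`, where `η` is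
the upper index of `ψ` at infinity. -/
theorem stmt13 (b : BranchingMechanism)
    (hint : (∫⁻ u in Set.Ioi (1 : ℝ), (ENNReal.ofReal (b.psi u))⁻¹) < ⊤)
    (v : ℝ → ℝ)
    (hv : ∀ a : ℝ, 0 < a → 0 < v a ∧ (∫ u in Set.Ioi (v a), 1 / b.psi u) = a)
    (hγ : 1 < lowerIndex b.psi) :
    ∀ ε > (0 : ℝ), ∃ᶠ δ in nhdsWithin (0 : ℝ) (Set.Ioi 0),
      Real.log (v δ) / Real.log (1 / δ) ≤ 1 / (upperIndex b.psi - 1) + ε := by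
  intro ε hε
  obtain ⟨a₀, ha₀, hta₀⟩ := exists_a0 b hγ
  set η := upperIndex b.psi with hηdef
  have hηa : a₀ ≤ η := le_upper b ha₀ hta₀
  have hη1 : 1 < η := lt_of_lt_of_le ha₀ hηa
  set c : ℝ := 1 / (η - 1) + ε with hc
  have hη10 : 0 < 1 / (η - 1) := div_pos one_pos (by linarith)
  have hc0 : 0 < c := by rw [hc]; linarith
  have hinvc : 1 / c < η - 1 := by
    have h1 : 1 / (η - 1) < c := by rw [hc]; linarith
    have := one_div_lt_one_div_of_lt (div_pos one_pos (by linarith : (0:ℝ) < η - 1)) h1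
    rwa [one_div_one_div] at this
  have hinvc0 : 0 < 1 / c := by positivity
  set a : ℝ := (1 + 1/c + η) / 2 with hadef
  have ha1 : 1 + 1/c < a := by rw [hadef]; linarith
  have ha2 : a < η := by rw [hadef]; linarith
  have ha0 : (0:ℝ) ≤ a := by linarith
  obtain ⟨c₀, hc₀, hfreq⟩ := freq_lower b ha0 ha2
  -- global lower bound threshold
  have hev : ∀ᶠ l in atTop, ((1:ℝ) ≤ l ^ (-a₀) * b.psi l ∧ (1:ℝ) ≤ l) :=
    (hta₀.eventually_ge_atTop 1).and (eventually_ge_atTop (1:ℝ))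
  obtain ⟨Λ₁, hΛ₁'⟩ := eventually_atTop.mp hev
  have hΛ₁ : ∀ u : ℝ, max Λ₁ 1 ≤ u → u ^ a₀ ≤ b.psi u := by
    intro u hu
    obtain ⟨h1, h2⟩ := hΛ₁' u (le_trans (le_max_left _ _) hu)
    have hu0 : (0:ℝ) < u := lt_of_lt_of_le one_pos h2
    calc u ^ a₀ = u ^ a₀ * 1 := by ring
      _ ≤ u ^ a₀ * (u ^ (-a₀) * b.psi u) :=
        mul_le_mul_of_nonneg_left h1 (Real.rpow_nonneg hu0.le _)
      _ = b.psi u := by rw [← mul_assoc, ← Real.rpow_add hu0]; simp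
  set K : ℝ := max 1 ((1/c + 1)/(a₀ - 1)) with hKdef
  have hK1 : (1:ℝ) ≤ K := le_max_left _ _
  have hK2 : 1/c + 1 ≤ K * (a₀ - 1) := by
    have h := le_max_right 1 ((1/c + 1)/(a₀ - 1))
    rw [div_le_iff₀ (by linarith : (0:ℝ) < a₀ - 1)] at h
    calc 1/c + 1 ≤ (max 1 ((1/c + 1)/(a₀ - 1))) * (a₀ - 1) := h
      _ = K * (a₀ - 1) := by rw [hKdef]
  set σ : ℝ := (a - 1 - 1/c)/2 with hσ
  have hσ0 : 0 < σ := by rw [hσ]; linarith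
  set D₁ : ℝ := (K - 1)/(c₀ * σ) with hD₁def
  have hD₁ : 0 ≤ D₁ := div_nonneg (by linarith) (by positivity)
  set D₂ : ℝ := 1/(a₀ - 1) with hD₂def
  have hD₂ : 0 ≤ D₂ := le_of_lt (by rw [hD₂def]; exact div_pos one_pos (by linarith))
  set τ : ℝ := K * (a₀ - 1) - 1/c with hτ
  have hτ0 : 0 < τ := by rw [hτ]; linarith
  have hΦ : Tendsto (fun l : ℝ => D₁ * l ^ (-σ) + D₂ * l ^ (-τ)) atTop (nhds 0) := by
    have h1 := (tendsto_rpow_neg_atTop hσ0).const_mul D₁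
    have h2 := (tendsto_rpow_neg_atTop hτ0).const_mul D₂
    simpa using h1.add h2
  have hev2 : ∀ᶠ l : ℝ in atTop, D₁ * l ^ (-σ) + D₂ * l ^ (-τ) < 1 :=
    hΦ.eventually_lt_const one_pos
  rw [frequently_iff]
  intro U hU
  rw [mem_nhdsGT_iff_exists_Ioo_subset] at hU
  obtain ⟨w, hw, hsub⟩ := hU
  have hw0 : (0:ℝ) < w := hw
  have hev3 : ∀ᶠ l : ℝ in atTop, l ^ (-(1/c)) < w :=
    (tendsto_rpow_neg_atTop hinvc0).eventually_lt_const hw0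
  obtain ⟨Λ₂, hΛ₂⟩ := eventually_atTop.mp
    ((hev2.and hev3).and (eventually_ge_atTop (max (max Λ₁ 1) 2)))
  obtain ⟨lam, hlamΛ, hlam1, hlamfreq⟩ := hfreq Λ₂
  obtain ⟨⟨hΦlam, hδw⟩, hlambig⟩ := hΛ₂ lam hlamΛ
  have hlam2 : (2:ℝ) ≤ lam := le_trans (le_max_right _ _) hlambig
  have hlamΛ₁ : max Λ₁ 1 ≤ lam := le_trans (le_max_left _ _) hlambig
  have hlamgt1 : (1:ℝ) < lam := by linarith
  have hlam0 : (0:ℝ) < lam := by linarith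
  have hlow : ∀ u : ℝ, lam ≤ u → u ^ a₀ ≤ b.psi u := fun u hu =>
    hΛ₁ u (le_trans hlamΛ₁ hu)
  obtain ⟨hintT, hTle⟩ := tail_bound b ha₀ hK1 hlamgt1 hlow
  have hψlam : 0 < b.psi lam :=
    lt_of_lt_of_le (Real.rpow_pos_of_pos hlam0 a₀) (hlow lam le_rfl)
  have hloglam : 0 < Real.log lam := Real.log_pos hlamgt1
  -- bound term 1
  have hB1 : lam / b.psi lam * ((K - 1) * Real.log lam) ≤ D₁ * lam ^ (1 - a + σ) := by
    have hA : lam / b.psi lam ≤ lam / (c₀ * lam ^ a) :=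
      div_le_div_of_nonneg_left hlam0.le (by positivity) hlamfreq
    have hlog : Real.log lam ≤ lam ^ σ / σ := by
      have h1 : σ * Real.log lam = Real.log (lam ^ σ) := (Real.log_rpow hlam0 σ).symm
      have h2 : Real.log (lam ^ σ) ≤ lam ^ σ - 1 :=
        Real.log_le_sub_one_of_pos (Real.rpow_pos_of_pos hlam0 σ)
      rw [le_div_iff₀ hσ0, mul_comm]
      have h3 : lam ^ σ - 1 ≤ lam ^ σ := by linarith
      linarith
    have hmul : lam / b.psi lam * ((K - 1) * Real.log lam)
        ≤ lam / (c₀ * lam ^ a) * ((K - 1) * (lam ^ σ / σ)) := by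
      refine mul_le_mul hA ?_ ?_ ?_
      · exact mul_le_mul_of_nonneg_left hlog (by linarith)
      · exact mul_nonneg (by linarith) hloglam.le
      · positivity
    have hid : lam / (c₀ * lam ^ a) * ((K - 1) * (lam ^ σ / σ)) = D₁ * lam ^ (1 - a + σ) := by
      rw [show (1:ℝ) - a + σ = 1 + -a + σ by ring, Real.rpow_add hlam0,
        Real.rpow_add hlam0, Real.rpow_one, Real.rpow_neg hlam0.le, hD₁def]
      have hpa : (0:ℝ) < lam ^ a := Real.rpow_pos_of_pos hlam0 a
      field_simp
    linarith
  -- bound term 2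
  have hB2 : (lam ^ K) ^ (1 - a₀) / (a₀ - 1) = D₂ * lam ^ (K * (1 - a₀)) := by
    rw [← Real.rpow_mul hlam0.le, hD₂def]
    ring
  set δ : ℝ := lam ^ (-(1/c)) with hδ
  have hδ0 : 0 < δ := Real.rpow_pos_of_pos hlam0 _
  -- combine : T(lam) ≤ δ
  have hTδ : (∫ u in Ioi lam, 1 / b.psi u) ≤ δ := by
    have he1 : (1:ℝ) - a + σ = -σ + -(1/c) := by rw [hσ]; ring
    have he2 : K * (1 - a₀) = -τ + -(1/c) := by rw [hτ]; ring
    have hfact : D₁ * lam ^ (1 - a + σ) + D₂ * lam ^ (K * (1 - a₀))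
        = (D₁ * lam ^ (-σ) + D₂ * lam ^ (-τ)) * δ := by
      rw [he1, he2, Real.rpow_add hlam0, Real.rpow_add hlam0, hδ]
      ring
    have hb : (D₁ * lam ^ (-σ) + D₂ * lam ^ (-τ)) * δ ≤ 1 * δ :=
      mul_le_mul_of_nonneg_right hΦlam.le hδ0.le
    rw [one_mul] at hb
    calc (∫ u in Ioi lam, 1 / b.psi u)
        ≤ lam / b.psi lam * ((K - 1) * Real.log lam) + (lam ^ K) ^ (1 - a₀) / (a₀ - 1) := hTle
      _ ≤ D₁ * lam ^ (1 - a + σ) + D₂ * lam ^ (K * (1 - a₀)) := by rw [hB2]; linarith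
      _ = (D₁ * lam ^ (-σ) + D₂ * lam ^ (-τ)) * δ := hfact
      _ ≤ δ := hb
  obtain ⟨hvpos, hvint⟩ := hv δ hδ0
  -- v δ ≤ lam
  have hvlam : v δ ≤ lam := by
    by_contra hcon
    push_neg at hcon
    have hψv : 0 < b.psi (v δ) :=
      lt_of_lt_of_le (Real.rpow_pos_of_pos hvpos a₀) (hlow (v δ) hcon.le)
    have hun : Ioc lam (v δ) ∪ Ioi (v δ) = Ioi lam := Ioc_union_Ioi_eq_Ioi hcon.le
    have hintIoc : IntegrableOn (fun u : ℝ => 1 / b.psi u) (Ioc lam (v δ)) volume :=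
      hintT.mono_set (by rw [← hun]; exact subset_union_left)
    have hintIoi : IntegrableOn (fun u : ℝ => 1 / b.psi u) (Ioi (v δ)) volume :=
      hintT.mono_set (by rw [← hun]; exact subset_union_right)
    have hsplit : (∫ u in Ioi lam, 1 / b.psi u)
        = (∫ u in Ioc lam (v δ), 1 / b.psi u) + ∫ u in Ioi (v δ), 1 / b.psi u := by
      rw [← hun]
      exact setIntegral_union (Ioc_disjoint_Ioi le_rfl) measurableSet_Ioi hintIoc hintIoi
    have hlb : (v δ - lam) * (b.psi (v δ))⁻¹ ≤ ∫ u in Ioc lam (v δ), 1 / b.psi u := by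
      have hmono := setIntegral_mono_on
        ((integrableOn_const_iff (C := (b.psi (v δ))⁻¹)).mpr (Or.inr (by rw [Real.volume_Ioc]; exact ENNReal.ofReal_lt_top)))
        hintIoc measurableSet_Ioc
        (fun u hu => by
          have hu1 : lam ≤ u := hu.1.le
          have hψu : 0 < b.psi u :=
            lt_of_lt_of_le (Real.rpow_pos_of_pos (by linarith) a₀) (hlow u hu1)
          have hmon : b.psi u ≤ b.psi (v δ) :=
            psi_monotoneOn b (mem_Ici.mpr (by linarith)) (mem_Ici.mpr hvpos.le) hu.2
          rw [one_div]
          exact inv_anti₀ hψu hmon)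
      rwa [setIntegral_const, Real.volume_real_Ioc_of_le (by linarith),
        smul_eq_mul] at hmono
    have hpos : 0 < (v δ - lam) * (b.psi (v δ))⁻¹ :=
      mul_pos (by linarith) (inv_pos.mpr hψv)
    rw [hsplit, hvint] at hTδ
    linarith
  -- conclude
  refine ⟨δ, hsub ⟨hδ0, hδw⟩, ?_⟩
  have hlogv : Real.log (v δ) ≤ Real.log lam := Real.log_le_log hvpos hvlam
  have hlogδ : Real.log (1 / δ) = (1/c) * Real.log lam := by
    rw [one_div, hδ, Real.log_inv, Real.log_rpow hlam0]
    ring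
  have hlogδpos : 0 < Real.log (1 / δ) := by rw [hlogδ]; positivity
  calc Real.log (v δ) / Real.log (1 / δ) ≤ Real.log lam / Real.log (1 / δ) :=
        (div_le_div_iff_of_pos_right hlogδpos).mpr hlogv
    _ = c := by
        rw [hlogδ]
        field_simp
    _ = 1 / (η - 1) + ε := hc
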